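/- arXiv:2512.12408 — 4 statements merged into one kernel-verified Lean document; each statement's English description precedes it below -/
import Mathlib

section
/- For fixed α > 0 and δ > -1, the equation ρ̂(λ; α, δ) = 1 has a unique root λ* in (0, ∞); moreover ρ̂ is continuous and strictly decreasing in λ on (0,∞), with ρ̂(λ) → ∞ as λ → 0+ and ρ̂(λ) → 0 as λ → ∞. -/
open Finset Filter

namespace MalthusAux

noncomputable def Tm (a d l : ℝ) (n : ℕ) : ℝ :=
  ∏ i ∈ Finset.range (n + 1), 1 / (((i : ℝ) + d + 1) ^ a * l + 1)

noncomputable def Fm (a d l : ℝ) : ℝ := ∑' n : ℕ, Tm a d l n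

variable {a d : ℝ}

lemma base_pos (hd : -1 < d) (i : ℕ) : (0:ℝ) < (i:ℝ) + d + 1 := by
  have : (0:ℝ) ≤ (i:ℝ) := Nat.cast_nonneg i
  linarith

lemma c_pos (hd : -1 < d) (i : ℕ) : 0 < ((i:ℝ) + d + 1) ^ a :=
  Real.rpow_pos_of_pos (base_pos hd i) a

lemma C_pos (hd : -1 < d) : 0 < (d + 1) ^ a :=
  Real.rpow_pos_of_pos (by linarith) a

lemma denom_pos (hd : -1 < d) {l : ℝ} (hl : 0 ≤ l) (i : ℕ) :
    0 < ((i:ℝ) + d + 1) ^ a * l + 1 := by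
  nlinarith [c_pos (a := a) hd i]

lemma C_le_c (ha : 0 < a) (hd : -1 < d) (i : ℕ) :
    (d + 1) ^ a ≤ ((i:ℝ) + d + 1) ^ a := by
  apply Real.rpow_le_rpow (by linarith) _ ha.le
  have : (0:ℝ) ≤ (i:ℝ) := Nat.cast_nonneg i
  linarith

lemma Tm_pos (hd : -1 < d) {l : ℝ} (hl : 0 ≤ l) (n : ℕ) : 0 < Tm a d l n := by
  exact Finset.prod_pos fun i _ => by
    have := denom_pos (a := a) hd hl i; positivity

lemma factor_le (ha : 0 < a) (hd : -1 < d) {l : ℝ} (hl : 0 ≤ l) (i : ℕ) :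
    1 / (((i:ℝ) + d + 1) ^ a * l + 1) ≤ 1 / ((d + 1) ^ a * l + 1) := by
  apply one_div_le_one_div_of_le
  · nlinarith [C_pos (a := a) hd]
  · nlinarith [C_le_c ha hd i]

lemma Tm_le_geom (ha : 0 < a) (hd : -1 < d) {l : ℝ} (hl : 0 ≤ l) (n : ℕ) :
    Tm a d l n ≤ (1 / ((d + 1) ^ a * l + 1)) ^ (n + 1) := by
  have h := Finset.prod_le_prod
    (s := Finset.range (n + 1))
    (f := fun i : ℕ => 1 / (((i:ℝ) + d + 1) ^ a * l + 1))
    (g := fun _ : ℕ => 1 / ((d + 1) ^ a * l + 1))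
    (fun i _ => le_of_lt (by have := denom_pos (a := a) hd hl i; positivity))
    (fun i _ => factor_le ha hd hl i)
  simpa [Tm, Finset.prod_const, Finset.card_range] using h

lemma r_lt_one (hd : -1 < d) {l : ℝ} (hl : 0 < l) :
    1 / ((d + 1) ^ a * l + 1) < 1 := by
  rw [div_lt_one (by nlinarith [C_pos (a := a) hd])]
  nlinarith [C_pos (a := a) hd]

lemma r_pos (hd : -1 < d) {l : ℝ} (hl : 0 ≤ l) :
    0 < 1 / ((d + 1) ^ a * l + 1) := by
  have : 0 < (d + 1) ^ a * l + 1 := by nlinarith [C_pos (a := a) hd]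
  positivity

lemma summable_geom_succ {r : ℝ} (hr0 : 0 ≤ r) (hr1 : r < 1) :
    Summable (fun n : ℕ => r ^ (n + 1)) := by
  have h : Summable (fun n : ℕ => r * r ^ n) :=
    (summable_geometric_of_lt_one hr0 hr1).mul_left r
  exact h.congr fun n => (pow_succ' r n).symm

lemma tsum_geom_succ {r : ℝ} (hr0 : 0 ≤ r) (hr1 : r < 1) :
    ∑' n : ℕ, r ^ (n + 1) = r * (1 - r)⁻¹ := by
  have : (fun n : ℕ => r ^ (n + 1)) = fun n : ℕ => r * r ^ n :=
    funext fun n => pow_succ' r n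
  rw [this, tsum_mul_left, tsum_geometric_of_lt_one hr0 hr1]

lemma summable_Tm (ha : 0 < a) (hd : -1 < d) {l : ℝ} (hl : 0 < l) :
    Summable (Tm a d l) := by
  apply Summable.of_nonneg_of_le (fun n => (Tm_pos hd hl.le n).le)
    (Tm_le_geom ha hd hl.le)
  exact summable_geom_succ (r_pos hd hl.le).le (r_lt_one hd hl)

lemma Tm_anti (hd : -1 < d) {l₁ l₂ : ℝ} (h1 : 0 < l₁) (h12 : l₁ ≤ l₂) (n : ℕ) :
    Tm a d l₂ n ≤ Tm a d l₁ n := by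
  have hl2 : 0 ≤ l₂ := le_trans h1.le h12
  apply Finset.prod_le_prod
  · intro i _
    exact le_of_lt (by have := denom_pos (a := a) hd hl2 i; positivity)
  · intro i _
    apply one_div_le_one_div_of_le (denom_pos hd h1.le i)
    nlinarith [c_pos (a := a) hd i]

lemma Tm_strict_anti_zero (hd : -1 < d) {l₁ l₂ : ℝ} (h1 : 0 < l₁) (h12 : l₁ < l₂) :
    Tm a d l₂ 0 < Tm a d l₁ 0 := by
  simp only [Tm, zero_add, Finset.prod_range_one, Nat.cast_zero]
  have hC := C_pos (a := a) hd
  exact one_div_lt_one_div_of_lt (by nlinarith) (by nlinarith)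

lemma Fm_strictAntiOn (ha : 0 < a) (hd : -1 < d) :
    StrictAntiOn (Fm a d) (Set.Ioi 0) := by
  intro l₁ h1 l₂ h2 h12
  exact Summable.tsum_lt_tsum (fun n => Tm_anti hd h1 h12.le n)
    (Tm_strict_anti_zero hd h1 h12) (summable_Tm ha hd (h1.trans h12)) (summable_Tm ha hd h1)

lemma Fm_continuousOn (ha : 0 < a) (hd : -1 < d) :
    ContinuousOn (Fm a d) (Set.Ioi 0) := by
  have key : ∀ ε : ℝ, 0 < ε → ContinuousOn (Fm a d) (Set.Ici ε) := by
    intro ε hε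
    apply continuousOn_tsum (u := fun n : ℕ => (1 / ((d + 1) ^ a * ε + 1)) ^ (n + 1))
    · intro n
      apply continuousOn_finset_prod
      intro i _
      apply ContinuousOn.div continuousOn_const
      · exact ((continuous_const.mul continuous_id).add continuous_const).continuousOn
      · intro x hx
        exact (denom_pos hd (le_trans hε.le hx) i).ne'
    · exact summable_geom_succ (r_pos hd hε.le).le (r_lt_one hd hε)
    · intro n l hl
      have hεl : ε ≤ l := hl
      have hl0 : (0:ℝ) < l := lt_of_lt_of_le hε hεl
      rw [Real.norm_of_nonneg (Tm_pos hd hl0.le n).le]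
      calc Tm a d l n ≤ (1 / ((d + 1) ^ a * l + 1)) ^ (n + 1) := Tm_le_geom ha hd hl0.le n
        _ ≤ (1 / ((d + 1) ^ a * ε + 1)) ^ (n + 1) := by
            apply pow_le_pow_left₀ (r_pos hd hl0.le).le
            apply one_div_le_one_div_of_le (by nlinarith [C_pos (a := a) hd])
            nlinarith [C_pos (a := a) hd]
  intro l hl
  have hl' : (0:ℝ) < l := hl
  have := (key (l / 2) (by linarith)).continuousAt (Ici_mem_nhds (by linarith : l / 2 < l))
  exact this.continuousWithinAt

lemma Fm_nonneg (hd : -1 < d) {l : ℝ} (hl : 0 < l) : 0 ≤ Fm a d l :=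
  tsum_nonneg fun n => (Tm_pos hd hl.le n).le

lemma Fm_le_bound (ha : 0 < a) (hd : -1 < d) {l : ℝ} (hl : 0 < l) :
    Fm a d l ≤ (1 / ((d + 1) ^ a * l + 1)) * (1 - 1 / ((d + 1) ^ a * l + 1))⁻¹ := by
  have h := Summable.tsum_le_tsum (Tm_le_geom ha hd hl.le) (summable_Tm ha hd hl)
    (summable_geom_succ (r_pos hd hl.le).le (r_lt_one hd hl))
  rwa [tsum_geom_succ (r_pos hd hl.le).le (r_lt_one hd hl)] at h

lemma Fm_tendsto_atTop_zero (ha : 0 < a) (hd : -1 < d) :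
    Tendsto (Fm a d) atTop (nhds 0) := by
  have hC := C_pos (a := a) hd
  have hden : Tendsto (fun l : ℝ => (d + 1) ^ a * l + 1) atTop atTop :=
    tendsto_atTop_add_const_right _ 1 (Tendsto.const_mul_atTop hC tendsto_id)
  have hr : Tendsto (fun l : ℝ => 1 / ((d + 1) ^ a * l + 1)) atTop (nhds 0) := by
    simpa [one_div, Pi.inv_def] using hden.inv_tendsto_atTop
  have hb : Tendsto
      (fun l : ℝ => (1 / ((d + 1) ^ a * l + 1)) * (1 - 1 / ((d + 1) ^ a * l + 1))⁻¹)
      atTop (nhds 0) := by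
    have := hr.mul (((tendsto_const_nhds (x := (1:ℝ))).sub hr).inv₀ (by norm_num : (1:ℝ) - 0 ≠ 0))
    simpa using this
  apply tendsto_of_tendsto_of_tendsto_of_le_of_le' tendsto_const_nhds hb
  · filter_upwards [eventually_gt_atTop (0:ℝ)] with l hl using Fm_nonneg hd hl
  · filter_upwards [eventually_gt_atTop (0:ℝ)] with l hl using Fm_le_bound ha hd hl

lemma Tm_tendsto_one (hd : -1 < d) (n : ℕ) :
    Tendsto (fun l => Tm a d l n) (nhdsWithin 0 (Set.Ioi 0)) (nhds 1) := by
  have h : ∀ i ∈ Finset.range (n + 1),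
      Tendsto (fun l : ℝ => 1 / (((i:ℝ) + d + 1) ^ a * l + 1)) (nhds 0)
        (nhds (1 / (((i:ℝ) + d + 1) ^ a * 0 + 1))) := by
    intro i _
    apply Tendsto.div tendsto_const_nhds
    · exact ((continuous_const.mul continuous_id).add continuous_const).tendsto 0
    · simp
  have := tendsto_finset_prod (Finset.range (n + 1)) h
  simp only [mul_zero, zero_add, div_one, Finset.prod_const_one] at this
  exact this.mono_left nhdsWithin_le_nhds

lemma Fm_tendsto_zero_atTop (ha : 0 < a) (hd : -1 < d) :
    Tendsto (Fm a d) (nhdsWithin 0 (Set.Ioi 0)) atTop := by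
  rw [tendsto_atTop]
  intro M
  obtain ⟨N, hN⟩ := exists_nat_gt M
  have hS : Tendsto (fun l => ∑ n ∈ Finset.range N, Tm a d l n)
      (nhdsWithin 0 (Set.Ioi 0)) (nhds N) := by
    have := tendsto_finset_sum (Finset.range N) (fun n _ => Tm_tendsto_one (a := a) hd n)
    simpa using this
  filter_upwards [hS.eventually (eventually_gt_nhds hN), self_mem_nhdsWithin] with l h1 h2
  have hl : (0:ℝ) < l := h2
  exact le_trans h1.le
    (Summable.sum_le_tsum (Finset.range N) (fun n _ => (Tm_pos hd hl.le n).le) (summable_Tm ha hd hl))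

lemma exists_root (ha : 0 < a) (hd : -1 < d) :
    ∃! l : ℝ, l ∈ Set.Ioi (0:ℝ) ∧ Fm a d l = 1 := by
  have h0 := Fm_tendsto_zero_atTop ha hd
  have hinf := Fm_tendsto_atTop_zero ha hd
  obtain ⟨l₁, hl₁M, hl₁pos⟩ : ∃ l, 1 < Fm a d l ∧ (0:ℝ) < l := by
    obtain ⟨l, h⟩ := ((h0.eventually_gt_atTop 1).and self_mem_nhdsWithin).exists
    exact ⟨l, h.1, h.2⟩
  obtain ⟨l₂, hl₂lt, hl₂gt⟩ : ∃ l, Fm a d l < 1 ∧ l₁ < l := by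
    have h1 : ∀ᶠ l in atTop, Fm a d l < 1 := hinf.eventually (gt_mem_nhds one_pos)
    obtain ⟨l, h⟩ := (h1.and (eventually_gt_atTop l₁)).exists
    exact ⟨l, h.1, h.2⟩
  have hsub : Set.Icc l₁ l₂ ⊆ Set.Ioi (0:ℝ) := fun x hx => lt_of_lt_of_le hl₁pos hx.1
  have hcont : ContinuousOn (Fm a d) (Set.Icc l₁ l₂) := (Fm_continuousOn ha hd).mono hsub
  obtain ⟨l, hlmem, hfl⟩ := intermediate_value_Icc' hl₂gt.le hcont ⟨hl₂lt.le, hl₁M.le⟩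
  refine ⟨l, ⟨hsub hlmem, hfl⟩, ?_⟩
  rintro l' ⟨hl', hfl'⟩
  exact (Fm_strictAntiOn ha hd).injOn hl' (hsub hlmem) (hfl'.trans hfl.symm)

end MalthusAux

open MalthusAux in
/-- For fixed `a > 0` and `d > -1`, the equation `ρ̂(l) = 1` has a unique root in `(0,∞)`;
moreover `ρ̂` is continuous and strictly decreasing on `(0,∞)`, tends to `∞` as `l → 0⁺`
and tends to `0` as `l → ∞`. -/
theorem malthusian_parameter_exists_unique (a d : ℝ) (ha : 0 < a) (hd : -1 < d) :
    (∃! l : ℝ, l ∈ Set.Ioi (0 : ℝ) ∧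
      (∑' n : ℕ, ∏ i ∈ Finset.range (n + 1),
        1 / (((i : ℝ) + d + 1) ^ a * l + 1)) = 1) ∧
    ContinuousOn
      (fun l : ℝ => ∑' n : ℕ, ∏ i ∈ Finset.range (n + 1),
        1 / (((i : ℝ) + d + 1) ^ a * l + 1)) (Set.Ioi 0) ∧
    StrictAntiOn
      (fun l : ℝ => ∑' n : ℕ, ∏ i ∈ Finset.range (n + 1),
        1 / (((i : ℝ) + d + 1) ^ a * l + 1)) (Set.Ioi 0) ∧
    Tendsto
      (fun l : ℝ => ∑' n : ℕ, ∏ i ∈ Finset.range (n + 1),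
        1 / (((i : ℝ) + d + 1) ^ a * l + 1)) (nhdsWithin 0 (Set.Ioi 0)) atTop ∧
    Tendsto
      (fun l : ℝ => ∑' n : ℕ, ∏ i ∈ Finset.range (n + 1),
        1 / (((i : ℝ) + d + 1) ^ a * l + 1)) atTop (nhds 0) :=
  ⟨exists_root ha hd, Fm_continuousOn ha hd, Fm_strictAntiOn ha hd,
    Fm_tendsto_zero_atTop ha hd, Fm_tendsto_atTop_zero ha hd⟩
end

section
/- Let {Z(t) : t ≥ 0} be a pure birth process with Z(0) = m almost surely and birth rate 1/(i+δ)^α when in state i (i ≥ m), where m ≥ 1, δ ≥ 0, 0 < α ≤ 1. Then Z(t)/t^{1/(1+α)} → (1+α)^{1/(1+α)} almost surely as t → ∞. -/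
open MeasureTheory ProbabilityTheory Filter Finset Real Set

namespace PBGaux

lemma expMeasure_ae_nonneg {r : ℝ} : ∀ᵐ x ∂(expMeasure r), 0 ≤ x := by
  rw [ae_iff]
  have h : {x : ℝ | ¬ 0 ≤ x} = Set.Iio 0 := by ext x; simp
  rw [h, expMeasure, gammaMeasure, withDensity_apply _ measurableSet_Iio]
  exact lintegral_gammaPDF_of_nonpos le_rfl

lemma integrableOn_aux {r : ℝ} (hr : 0 < r) (p : ℕ) :
    IntegrableOn (fun x : ℝ => x ^ p * (r * rexp (-(r * x)))) (Set.Ioi 0) := by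
  have h := integrableOn_rpow_mul_exp_neg_mul_rpow (p := 1) (s := (p : ℝ)) (b := r)
    (neg_one_lt_zero.trans_le (Nat.cast_nonneg p)) one_pos hr
  apply IntegrableOn.congr_fun (h.const_mul r) ?_ measurableSet_Ioi
  intro x hx
  simp only [Real.rpow_one, Real.rpow_natCast]
  ring

lemma real_integral_aux {r : ℝ} (hr : 0 < r) (p : ℕ) :
    ∫ x in Set.Ioi (0:ℝ), x ^ p * (r * rexp (-(r * x)))
      = (p.factorial : ℝ) * (r⁻¹) ^ p := by
  have h := integral_rpow_mul_exp_neg_mul_Ioi (a := (p : ℝ) + 1) (r := r) (by positivity : (0:ℝ) < (p:ℝ)+1) hr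
  have heq : ∀ x ∈ Set.Ioi (0:ℝ), x ^ ((p : ℝ) + 1 - 1) * rexp (-(r * x))
      = x ^ p * rexp (-(r * x)) := by
    intro x hx
    rw [add_sub_cancel_right, Real.rpow_natCast]
  rw [setIntegral_congr_fun measurableSet_Ioi heq] at h
  have : ∫ x in Set.Ioi (0:ℝ), x ^ p * (r * rexp (-(r * x)))
      = r * ∫ x in Set.Ioi (0:ℝ), x ^ p * rexp (-(r * x)) := by
    rw [← integral_const_mul]
    congr 1; ext x; ring
  rw [this, h, show (p:ℝ) + 1 = ((p+1 : ℕ) : ℝ) by push_cast; ring, Real.rpow_natCast,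
    Nat.cast_add, Nat.cast_one, Real.Gamma_nat_eq_factorial, one_div, pow_succ]
  have hrne : r ≠ 0 := hr.ne'
  field_simp

lemma lintegral_pow_expMeasure {r : ℝ} (hr : 0 < r) (p : ℕ) :
    ∫⁻ x, ENNReal.ofReal (x ^ p) ∂(expMeasure r)
      = ENNReal.ofReal ((p.factorial : ℝ) * (r⁻¹) ^ p) := by
  rw [expMeasure, gammaMeasure, lintegral_withDensity_eq_lintegral_mul _
    ((by exact (measurable_gammaPDFReal 1 r).ennreal_ofReal : Measurable (gammaPDF 1 r))) (by fun_prop)]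
  rw [← lintegral_add_compl (μ := (volume : Measure ℝ)) _ measurableSet_Ici, compl_Ici]
  have h0 : ∫⁻ x in Set.Iio (0:ℝ), (gammaPDF 1 r * fun x => ENNReal.ofReal (x ^ p)) x = 0 := by
    rw [setLIntegral_congr_fun (g := fun _ => 0) measurableSet_Iio
      (fun x (hx : x < 0) => by
        simp [Pi.mul_apply, gammaPDF_of_neg hx]), lintegral_zero]
  rw [h0, add_zero, ← setLIntegral_congr (Ioi_ae_eq_Ici (a := (0:ℝ)))]
  have h1 : ∀ x ∈ Set.Ioi (0:ℝ), (gammaPDF 1 r * fun x => ENNReal.ofReal (x ^ p)) x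
      = ENNReal.ofReal (x ^ p * (r * rexp (-(r * x)))) := by
    intro x hx
    have hx0 : (0:ℝ) ≤ x := le_of_lt hx
    have : gammaPDF 1 r x = ENNReal.ofReal (r * rexp (-(r * x))) := by
      rw [show gammaPDF 1 r x = exponentialPDF r x from rfl, exponentialPDF_of_nonneg hx0]
    rw [Pi.mul_apply, this, ← ENNReal.ofReal_mul (by positivity)]
    congr 1; ring
  rw [setLIntegral_congr_fun measurableSet_Ioi h1,
    ← ofReal_integral_eq_lintegral_ofReal (integrableOn_aux hr p)
      (ae_restrict_of_forall_mem measurableSet_Ioi (fun x hx => by have : 0 < x := hx; positivity)),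
    real_integral_aux hr p]

lemma integrable_pow_expMeasure {r : ℝ} (hr : 0 < r) (p : ℕ) :
    Integrable (fun x : ℝ => x ^ p) (expMeasure r) := by
  have hnn : 0 ≤ᵐ[expMeasure r] fun x : ℝ => x ^ p :=
    expMeasure_ae_nonneg.mono fun x hx => by positivity
  refine ⟨(by fun_prop : Measurable fun x : ℝ => x ^ p).aestronglyMeasurable, ?_⟩
  rw [hasFiniteIntegral_iff_ofReal hnn, lintegral_pow_expMeasure hr p]
  exact ENNReal.ofReal_lt_top

lemma integral_pow_expMeasure {r : ℝ} (hr : 0 < r) (p : ℕ) :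
    ∫ x, x ^ p ∂(expMeasure r) = (p.factorial : ℝ) * (r⁻¹) ^ p := by
  have hnn : 0 ≤ᵐ[expMeasure r] fun x : ℝ => x ^ p :=
    expMeasure_ae_nonneg.mono fun x hx => by positivity
  rw [← ENNReal.toReal_ofReal (show (0:ℝ) ≤ (p.factorial : ℝ) * (r⁻¹) ^ p by positivity),
    ← lintegral_pow_expMeasure hr p,
    ← ofReal_integral_eq_lintegral_ofReal (integrable_pow_expMeasure hr p) hnn,
    ENNReal.toReal_ofReal]
  exact integral_nonneg_of_ae hnn


lemma rpow_add_le {x y p : ℝ} (hx : 0 ≤ x) (hy : 0 ≤ y) (hp : 0 ≤ p) (hp1 : p ≤ 1) :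
    (x + y) ^ p ≤ x ^ p + y ^ p := by
  have h := NNReal.rpow_add_le_add_rpow x.toNNReal y.toNNReal hp hp1
  have h2 := NNReal.coe_le_coe.2 h
  push_cast [← Real.toNNReal_add hx hy, Real.coe_toNNReal x hx, Real.coe_toNNReal y hy,
    Real.coe_toNNReal _ (by positivity : (0:ℝ) ≤ x + y)] at h2
  exact h2

lemma mvt_rpow {a : ℝ} (ha : 0 < a) (k : ℕ) :
    (1 + a) * (k:ℝ) ^ a ≤ ((k:ℝ) + 1) ^ (1 + a) - (k:ℝ) ^ (1 + a) ∧
    ((k:ℝ) + 1) ^ (1 + a) - (k:ℝ) ^ (1 + a) ≤ (1 + a) * ((k:ℝ) + 1) ^ a := by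
  have h1a : (1:ℝ) ≤ 1 + a := by linarith
  obtain ⟨c, hc, hceq⟩ := exists_hasDerivAt_eq_slope (fun x : ℝ => x ^ (1 + a))
    (fun x => (1 + a) * x ^ a) (by linarith : (k:ℝ) < (k:ℝ) + 1)
    (fun x _ => (Real.continuousAt_rpow_const x (1 + a)
      (Or.inr (by linarith))).continuousWithinAt)
    (fun x _ => by
      simpa using Real.hasDerivAt_rpow_const (x := x) (p := 1 + a) (Or.inr h1a))
  rw [add_sub_cancel_left, div_one] at hceq
  have hk0 : (0:ℝ) ≤ (k:ℝ) := Nat.cast_nonneg k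
  have hc0 : 0 < c := lt_of_le_of_lt hk0 hc.1
  constructor
  · rw [← hceq]
    exact mul_le_mul_of_nonneg_left (Real.rpow_le_rpow hk0 hc.1.le ha.le) (by linarith)
  · rw [← hceq]
    exact mul_le_mul_of_nonneg_left (Real.rpow_le_rpow hc0.le hc.2.le ha.le) (by linarith)

lemma telescope_rpow {p : ℝ} (hp : 0 < p) (n : ℕ) :
    ∑ k ∈ range n, (((k:ℝ) + 1) ^ p - (k:ℝ) ^ p) = (n:ℝ) ^ p := by
  have := Finset.sum_range_sub (f := fun k : ℕ => ((k:ℝ)) ^ p) n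
  simp only [Nat.cast_succ] at this
  rw [this, Nat.cast_zero, Real.zero_rpow hp.ne']
  ring

lemma M_asymp {c a : ℝ} (hc : 0 ≤ c) (ha : 0 < a) (ha1 : a ≤ 1) :
    Tendsto (fun n : ℕ => (∑ k ∈ range n, ((k:ℝ) + c) ^ a) / (n:ℝ) ^ ((1:ℝ) + a))
      atTop (nhds (1 / (1 + a))) := by
  set p : ℝ := 1 + a with hp
  have hp0 : 0 < p := by positivity
  set M : ℕ → ℝ := fun n => ∑ k ∈ range n, ((k:ℝ) + c) ^ a with hM
  set L : ℕ → ℝ := fun n => ∑ k ∈ range n, ((k:ℝ)) ^ a with hLdef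
  have key : ∀ n : ℕ, |M n - (n:ℝ) ^ p / (1 + a)| ≤ (n:ℝ) ^ a + (n:ℝ) * c ^ a := by
    intro n
    have hLle : (1 + a) * L n ≤ (n:ℝ) ^ p := by
      rw [hLdef, Finset.mul_sum, ← telescope_rpow hp0 n]
      exact Finset.sum_le_sum fun k _ => (mvt_rpow ha k).1.trans_eq rfl
    have hsplit : ∑ k ∈ range n, ((k:ℝ) + 1) ^ a = L n + (n:ℝ) ^ a := by
      rw [hLdef, ← telescope_rpow ha n, ← Finset.sum_add_distrib]
      congr 1; ext k; ring
    have hUge : (n:ℝ) ^ p ≤ (1 + a) * (L n + (n:ℝ) ^ a) := by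
      rw [← hsplit, Finset.mul_sum, ← telescope_rpow hp0 n]
      exact Finset.sum_le_sum fun k _ => (mvt_rpow ha k).2
    have hLM : L n ≤ M n := Finset.sum_le_sum fun k _ =>
      Real.rpow_le_rpow (Nat.cast_nonneg k) (by linarith) ha.le
    have hML : M n ≤ L n + (n:ℝ) * c ^ a := by
      have : M n ≤ ∑ k ∈ range n, (((k:ℝ)) ^ a + c ^ a) :=
        Finset.sum_le_sum fun k _ => rpow_add_le (Nat.cast_nonneg k) hc ha.le ha1
      simpa [Finset.sum_add_distrib, hLdef, mul_comm] using this
    have hna : (0:ℝ) ≤ (n:ℝ) ^ a := Real.rpow_nonneg (Nat.cast_nonneg n) a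
    have hnc : (0:ℝ) ≤ (n:ℝ) * c ^ a := by positivity
    have h1a : (0:ℝ) < 1 + a := by linarith
    have h1 : (n:ℝ) ^ p / (1 + a) ≤ L n + (n:ℝ) ^ a := by
      rw [div_le_iff₀ h1a]; linarith
    have h2 : L n ≤ (n:ℝ) ^ p / (1 + a) := by
      rw [le_div_iff₀ h1a]; linarith
    rw [abs_le]
    constructor <;> [linarith; linarith]
  have hbound : ∀ n : ℕ, 1 ≤ n → ‖M n / (n:ℝ) ^ p - 1 / (1 + a)‖
      ≤ (n:ℝ) ^ (-1:ℝ) + c ^ a * (n:ℝ) ^ (-a) := by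
    intro n hn
    have hn0 : (0:ℝ) < (n:ℝ) := by exact_mod_cast hn
    have hnp : (0:ℝ) < (n:ℝ) ^ p := Real.rpow_pos_of_pos hn0 p
    have heq : M n / (n:ℝ) ^ p - 1 / (1 + a) = (M n - (n:ℝ) ^ p / (1 + a)) / (n:ℝ) ^ p := by
      field_simp
    rw [heq, Real.norm_eq_abs, abs_div, abs_of_pos hnp, div_le_iff₀ hnp]
    calc |M n - (n:ℝ) ^ p / (1 + a)| ≤ (n:ℝ) ^ a + (n:ℝ) * c ^ a := key n
      _ = ((n:ℝ) ^ (-1:ℝ) + c ^ a * (n:ℝ) ^ (-a)) * (n:ℝ) ^ p := by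
          rw [add_mul, mul_assoc, ← Real.rpow_add hn0, ← Real.rpow_add hn0]
          rw [show (-1:ℝ) + p = a by rw [hp]; ring, show -a + p = 1 by rw [hp]; ring,
            Real.rpow_one]
          ring
  have hzero : Tendsto (fun n : ℕ => (n:ℝ) ^ (-1:ℝ) + c ^ a * (n:ℝ) ^ (-a))
      atTop (nhds 0) := by
    have h1 : Tendsto (fun n : ℕ => (n:ℝ) ^ (-1:ℝ)) atTop (nhds 0) :=
      (tendsto_rpow_neg_atTop one_pos).comp tendsto_natCast_atTop_atTop
    have h2 : Tendsto (fun n : ℕ => (n:ℝ) ^ (-a)) atTop (nhds 0) :=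
      (tendsto_rpow_neg_atTop ha).comp tendsto_natCast_atTop_atTop
    simpa using h1.add (h2.const_mul (c ^ a))
  have hdiff : Tendsto (fun n : ℕ => M n / (n:ℝ) ^ p - 1 / (1 + a)) atTop (nhds 0) := by
    apply squeeze_zero_norm' _ hzero
    filter_upwards [eventually_ge_atTop 1] with n hn using hbound n hn
  have := hdiff.add_const (1 / (1 + a))
  simpa using this


lemma tendsto_sqrt_atTop : Tendsto (fun n : ℕ => Nat.sqrt n) atTop atTop := by
  apply tendsto_atTop_atTop.2
  intro b
  refine ⟨b * b, fun n hn => ?_⟩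
  calc b = Nat.sqrt (b * b) := (Nat.sqrt_eq b).symm
    _ ≤ Nat.sqrt n := Nat.sqrt_le_sqrt hn

lemma ratio_tendsto {p : ℝ} :
    Tendsto (fun j : ℕ => ((((j+1)^2 : ℕ)):ℝ) ^ p / (((j^2 : ℕ)):ℝ) ^ p) atTop (nhds 1) := by
  have hb : Tendsto (fun j : ℕ => ((j:ℝ) + 1) / (j:ℝ)) atTop (nhds 1) := by
    have h0 : Tendsto (fun j : ℕ => 1 + 1/(j:ℝ)) atTop (nhds 1) := by
      simpa using (tendsto_one_div_atTop_nhds_zero_nat (𝕜 := ℝ)).const_add 1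
    apply h0.congr'
    filter_upwards [eventually_ge_atTop 1] with j hj
    have : (0:ℝ) < (j:ℝ) := by exact_mod_cast hj
    field_simp
  have hb2 : Tendsto (fun j : ℕ => (((j:ℝ) + 1) / (j:ℝ)) ^ 2) atTop (nhds 1) := by
    simpa using hb.pow 2
  have h3 : Tendsto (fun j : ℕ => ((((j:ℝ) + 1) / (j:ℝ)) ^ 2) ^ p) atTop (nhds 1) := by
    have hcont := (Real.continuousAt_rpow_const 1 p (Or.inl one_ne_zero)).tendsto
    have := hcont.comp hb2
    simpa [Real.one_rpow, Function.comp_def] using this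
  apply h3.congr'
  filter_upwards [eventually_ge_atTop 1] with j hj
  have hj0 : (0:ℝ) < (j:ℝ) := by exact_mod_cast hj
  push_cast
  rw [← Real.div_rpow (by positivity) (by positivity), div_pow]

lemma ratio_tendsto' {p : ℝ} :
    Tendsto (fun j : ℕ => (((j^2 : ℕ)):ℝ) ^ p / ((((j+1)^2 : ℕ)):ℝ) ^ p) atTop (nhds 1) := by
  have h := (ratio_tendsto (p := p)).inv₀ one_ne_zero
  rw [inv_one] at h
  apply h.congr'
  filter_upwards [eventually_ge_atTop 1] with j hj
  have hj0 : (0:ℝ) < (j:ℝ) := by exact_mod_cast hj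
  rw [← one_div, one_div_div]

lemma interp {a c : ℝ} (ha : 0 < a) (s M : ℕ → ℝ)
    (hmono : Monotone s) (hpos : ∀ n, 0 ≤ s n)
    (hM : Tendsto (fun n : ℕ => M n / (n:ℝ) ^ ((1:ℝ)+a)) atTop (nhds c))
    (hsq : Tendsto (fun j : ℕ => (s (j^2) - M (j^2)) / ((j^2 : ℕ):ℝ) ^ ((1:ℝ)+a))
      atTop (nhds 0)) :
    Tendsto (fun n : ℕ => s n / (n:ℝ) ^ ((1:ℝ)+a)) atTop (nhds c) := by
  set p : ℝ := 1 + a with hp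
  have hp0 : 0 < p := by positivity
  set q : ℕ → ℝ := fun j => ((j^2 : ℕ):ℝ) ^ p with hq
  have hqpos : ∀ j : ℕ, 1 ≤ j → 0 < q j := by
    intro j hj
    have : (0:ℝ) < ((j^2 : ℕ):ℝ) := by
      have : 1 ≤ j^2 := Nat.one_le_iff_ne_zero.2 (by positivity)
      exact_mod_cast this
    exact Real.rpow_pos_of_pos this p
  have hsqsq : Tendsto (fun j : ℕ => (j:ℕ)^2) atTop atTop :=
    tendsto_atTop_mono (fun j => Nat.le_self_pow two_ne_zero j) tendsto_id
  have hMc : Tendsto (fun j : ℕ => M (j^2) / q j) atTop (nhds c) := hM.comp hsqsq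
  have hf : Tendsto (fun j : ℕ => s (j^2) / q j) atTop (nhds c) := by
    have := hsq.add hMc
    rw [zero_add] at this
    apply this.congr
    intro j
    rw [← add_div, sub_add_cancel]
  -- lower and upper comparison functions
  have hlowF : Tendsto (fun j : ℕ => s (j^2) / q (j+1)) atTop (nhds c) := by
    have h := hf.mul (ratio_tendsto' (p := p))
    rw [mul_one] at h
    apply h.congr'
    filter_upwards [eventually_ge_atTop 1] with j hj
    have h1 := hqpos j hj
    have h2 := hqpos (j+1) (by omega)
    rw [hq]
    field_simp
  have hupF : Tendsto (fun j : ℕ => s ((j+1)^2) / q j) atTop (nhds c) := by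
    have hf1 : Tendsto (fun j : ℕ => s ((j+1)^2) / q (j+1)) atTop (nhds c) :=
      hf.comp (tendsto_add_atTop_nat 1)
    have h := hf1.mul (ratio_tendsto (p := p))
    rw [mul_one] at h
    apply h.congr'
    filter_upwards [eventually_ge_atTop 1] with j hj
    have h1 := hqpos j hj
    have h2 := hqpos (j+1) (by omega)
    rw [hq]
    field_simp
  have hu := tendsto_sqrt_atTop
  refine tendsto_of_tendsto_of_tendsto_of_le_of_le' (hlowF.comp hu) (hupF.comp hu) ?_ ?_
  · filter_upwards [hu.eventually (eventually_ge_atTop 1)] with n hn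
    set j := Nat.sqrt n with hj
    have h1 : j^2 ≤ n := Nat.sqrt_le' n
    have h2 : n ≤ (j+1)^2 := le_of_lt (Nat.lt_succ_sqrt' n)
    have hn1 : 1 ≤ n := le_trans (by nlinarith : 1 ≤ j^2) h1
    have hnp : (0:ℝ) < (n:ℝ) ^ p :=
      Real.rpow_pos_of_pos (by exact_mod_cast hn1) p
    have hcast2 : ((n:ℕ):ℝ) ≤ (((j+1)^2 : ℕ):ℝ) := by exact_mod_cast h2
    exact div_le_div₀ (hpos n) (hmono h1) hnp
      (Real.rpow_le_rpow (by positivity) hcast2 hp0.le)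
  · filter_upwards [hu.eventually (eventually_ge_atTop 1)] with n hn
    set j := Nat.sqrt n with hj
    have h1 : j^2 ≤ n := Nat.sqrt_le' n
    have h2 : n ≤ (j+1)^2 := le_of_lt (Nat.lt_succ_sqrt' n)
    have hn1 : 1 ≤ n := le_trans (by nlinarith : 1 ≤ j^2) h1
    have hqj := hqpos j hn
    have hcast : ((j^2 : ℕ):ℝ) ≤ (n:ℝ) := by exact_mod_cast h1
    exact div_le_div₀ (hpos ((j+1)^2)) (hmono h2) hqj
      (Real.rpow_le_rpow (by positivity) hcast hp0.le)


lemma ratio_tendsto_sub {p : ℝ} :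
    Tendsto (fun n : ℕ => (((n-1 : ℕ)):ℝ) ^ p / ((n:ℕ):ℝ) ^ p) atTop (nhds 1) := by
  have hb : Tendsto (fun n : ℕ => 1 - 1/(n:ℝ)) atTop (nhds 1) := by
    simpa using (tendsto_one_div_atTop_nhds_zero_nat (𝕜 := ℝ)).const_sub 1
  have h3 : Tendsto (fun n : ℕ => (1 - 1/(n:ℝ)) ^ p) atTop (nhds 1) := by
    have hcont := (Real.continuousAt_rpow_const 1 p (Or.inl one_ne_zero)).tendsto
    simpa [Real.one_rpow, Function.comp_def] using hcont.comp hb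
  apply h3.congr'
  filter_upwards [eventually_ge_atTop 1] with n hn
  have hn0 : (0:ℝ) < (n:ℝ) := by exact_mod_cast hn
  rw [← Real.div_rpow (by
      have : (1:ℝ) ≤ (n:ℝ) := by exact_mod_cast hn
      have h2 : ((n-1:ℕ):ℝ) = (n:ℝ) - 1 := by
        push_cast [Nat.cast_sub hn]; ring
      rw [h2]; linarith) hn0.le]
  congr 2
  have h2 : ((n-1:ℕ):ℝ) = (n:ℝ) - 1 := by push_cast [Nat.cast_sub hn]; ring
  rw [h2]
  field_simp

lemma invert {a c : ℝ} (ha : 0 < a) (hc : 0 < c) (s : ℕ → ℝ)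
    (hmono : Monotone s) (hs0 : s 0 = 0)
    (hs : Tendsto (fun n : ℕ => s n / (n:ℝ) ^ ((1:ℝ)+a)) atTop (nhds c)) :
    Tendsto (fun t : ℝ => ((sSup {n : ℕ | s (n-1) ≤ t} : ℕ) : ℝ) / t ^ ((1:ℝ)/(1+a)))
      atTop (nhds ((1/c) ^ ((1:ℝ)/(1+a)))) := by
  set p : ℝ := 1 + a with hp
  have hp0 : 0 < p := by positivity
  -- s tends to infinity
  have hstop : Tendsto s atTop atTop := by
    have hmain : Tendsto (fun n : ℕ => (c/2) * (n:ℝ) ^ p) atTop atTop :=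
      ((tendsto_rpow_atTop hp0).comp tendsto_natCast_atTop_atTop).const_mul_atTop
        (by positivity)
    apply tendsto_atTop_mono' _ _ hmain
    filter_upwards [hs.eventually (eventually_gt_nhds (by linarith : c/2 < c)),
      eventually_ge_atTop 1] with n hn hn1
    have hnp : (0:ℝ) < (n:ℝ) ^ p :=
      Real.rpow_pos_of_pos (by exact_mod_cast hn1) p
    rw [lt_div_iff₀ hnp] at hn
    linarith
  set N : ℝ → ℕ := fun t => sSup {n : ℕ | s (n-1) ≤ t} with hN
  have hbdd : ∀ t : ℝ, BddAbove {n : ℕ | s (n-1) ≤ t} := by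
    intro t
    obtain ⟨K, hK⟩ := (hstop.eventually (eventually_gt_atTop t)).exists_forall_of_atTop
    refine ⟨K + 1, fun n hn => ?_⟩
    by_contra hcon
    push_neg at hcon
    have : K ≤ n - 1 := by omega
    exact absurd hn (not_le.2 (hK _ this))
  have hne : ∀ t : ℝ, 0 ≤ t → {n : ℕ | s (n-1) ≤ t}.Nonempty := by
    intro t ht
    exact ⟨0, by simpa [hs0] using ht⟩
  have hmem : ∀ t : ℝ, 0 ≤ t → s (N t - 1) ≤ t := fun t ht =>
    Nat.sSup_mem (hne t ht) (hbdd t)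
  have hgt : ∀ t : ℝ, 0 ≤ t → t < s (N t) := by
    intro t ht
    by_contra hcon
    push_neg at hcon
    have hmem1 : N t + 1 ∈ {n : ℕ | s (n-1) ≤ t} := by
      simpa using hcon
    have := le_csSup (hbdd t) hmem1
    simp only [hN] at this
    omega
  have hN1 : ∀ t : ℝ, 0 ≤ t → 1 ≤ N t := by
    intro t ht
    exact le_csSup (hbdd t) (by simpa [hs0] using ht)
  have hNtop : Tendsto N atTop atTop := by
    apply tendsto_atTop_atTop.2
    intro K
    refine ⟨s K, fun t ht => ?_⟩
    have : K + 1 ∈ {n : ℕ | s (n-1) ≤ t} := by simpa using ht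
    have h2 := le_csSup (hbdd t) this
    simp only [hN]
    omega
  -- the squeeze
  have hh : Tendsto (fun n : ℕ => s (n-1) / (n:ℝ) ^ p) atTop (nhds c) := by
    have hg1 : Tendsto (fun n : ℕ => s (n-1) / ((n-1:ℕ):ℝ) ^ p) atTop (nhds c) :=
      hs.comp (tendsto_sub_atTop_nat 1)
    have h := hg1.mul (ratio_tendsto_sub (p := p))
    rw [mul_one] at h
    apply h.congr'
    filter_upwards [eventually_ge_atTop 2] with n hn
    have h1 : (0:ℝ) < ((n-1:ℕ):ℝ) ^ p := by
      have : (1:ℕ) ≤ n - 1 := by omega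
      exact Real.rpow_pos_of_pos (by exact_mod_cast this) p
    have h2 : (0:ℝ) < ((n:ℕ):ℝ) ^ p := by
      have : (1:ℕ) ≤ n := by omega
      exact Real.rpow_pos_of_pos (by exact_mod_cast this) p
    show s (n-1) / ((n-1:ℕ):ℝ) ^ p * (((n-1:ℕ):ℝ) ^ p / ((n:ℕ):ℝ) ^ p) = _
    rw [div_mul_div_comm, mul_comm (s (n-1)) _, mul_div_mul_left _ _ h1.ne']
  have hsq2 : Tendsto (fun t : ℝ => t / ((N t : ℕ):ℝ) ^ p) atTop (nhds c) := by
    refine tendsto_of_tendsto_of_tendsto_of_le_of_le' (hh.comp hNtop) (hs.comp hNtop) ?_ ?_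
    · filter_upwards [eventually_ge_atTop (0:ℝ)] with t ht
      have hNp : (0:ℝ) < ((N t : ℕ):ℝ) ^ p :=
        Real.rpow_pos_of_pos (by exact_mod_cast hN1 t ht) p
      show s (N t - 1) / ((N t : ℕ):ℝ) ^ p ≤ t / ((N t : ℕ):ℝ) ^ p
      gcongr
      exact hmem t ht
    · filter_upwards [eventually_ge_atTop (0:ℝ)] with t ht
      have hNp : (0:ℝ) < ((N t : ℕ):ℝ) ^ p :=
        Real.rpow_pos_of_pos (by exact_mod_cast hN1 t ht) p
      show t / ((N t : ℕ):ℝ) ^ p ≤ s (N t) / ((N t : ℕ):ℝ) ^ p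
      gcongr
      exact (hgt t ht).le
  have hinv : Tendsto (fun t : ℝ => ((N t : ℕ):ℝ) ^ p / t) atTop (nhds (1/c)) := by
    have h := hsq2.inv₀ hc.ne'
    rw [← one_div] at h
    apply h.congr
    intro t
    rw [← one_div, one_div_div]
  have hfin : Tendsto (fun t : ℝ => (((N t : ℕ):ℝ) ^ p / t) ^ ((1:ℝ)/p))
      atTop (nhds ((1/c) ^ ((1:ℝ)/p))) := by
    exact (Real.continuousAt_rpow_const (1/c) ((1:ℝ)/p)
      (Or.inl (by positivity))).tendsto.comp hinv
  rw [show (1:ℝ)/(1+a) = 1/p from rfl]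
  apply hfin.congr'
  filter_upwards [eventually_gt_atTop (0:ℝ)] with t ht
  have hN0 : (0:ℝ) ≤ ((N t : ℕ):ℝ) := Nat.cast_nonneg _
  rw [show sSup {n : ℕ | s (n-1) ≤ t} = N t from rfl]
  rw [Real.div_rpow (Real.rpow_nonneg hN0 p) ht.le,
    ← Real.rpow_mul hN0, mul_one_div, div_self hp0.ne', Real.rpow_one]

end PBGaux


set_option maxHeartbeats 1000000 in
open PBGaux in
/-- Let `Z(t)` be a pure birth process started at `m` with birth rate `1/(i+d)^a` in state `i`,
realized as `Z t = max {n : T n ≤ t} + m - 1` where `T n = E_0 + ⋯ + E_{n-2}` is a sum of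
independent exponentials with means `(m+d)^a, …, (m+n-2+d)^a`.  Then
`Z(t)/t^{1/(1+a)} → (1+a)^{1/(1+a)}` almost surely as `t → ∞`. -/
theorem pure_birth_growth
    {Ω : Type*} [MeasureSpace Ω] (μ : Measure Ω) [IsProbabilityMeasure μ]
    (m : ℕ) (hm : 1 ≤ m) (d a : ℝ) (hd : 0 ≤ d) (ha : 0 < a) (ha1 : a ≤ 1)
    (E : ℕ → Ω → ℝ) (hmeas : ∀ k, Measurable (E k))
    (hindep : iIndepFun E μ)
    (hdist : ∀ k : ℕ,
      Measure.map (E k) μ = expMeasure ((((m : ℝ) + k + d) ^ a)⁻¹).toNNReal)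
    (T : ℕ → Ω → ℝ) (hT : ∀ n ω, T n ω = ∑ k ∈ Finset.range (n - 1), E k ω)
    (Z : ℝ → Ω → ℕ) (hZ : ∀ t ω, Z t ω = sSup {n : ℕ | T n ω ≤ t} + m - 1) :
    ∀ᵐ ω ∂μ, Tendsto
      (fun t : ℝ => (Z t ω : ℝ) / t ^ ((1 : ℝ) / (1 + a)))
      atTop (nhds ((1 + a) ^ ((1 : ℝ) / (1 + a)))) := by
  classical
  have hm1 : (1:ℝ) ≤ (m:ℝ) := by exact_mod_cast hm
  set p : ℝ := 1 + a with hpdef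
  have hp0 : 0 < p := by positivity
  set mk : ℕ → ℝ := fun k => ((m:ℝ) + k + d) ^ a with hmkdef
  have hbase : ∀ k : ℕ, (1:ℝ) ≤ (m:ℝ) + k + d := fun k => by
    have : (0:ℝ) ≤ (k:ℝ) := Nat.cast_nonneg k
    linarith
  have hmkpos : ∀ k, 0 < mk k := fun k =>
    Real.rpow_pos_of_pos (by linarith [hbase k]) a
  have hrpos : ∀ k, (0:ℝ) < (mk k)⁻¹ := fun k => inv_pos.2 (hmkpos k)
  have hdist' : ∀ k, Measure.map (E k) μ = expMeasure ((mk k)⁻¹) := by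
    intro k
    rw [hdist k]
    congr 1
    exact Real.coe_toNNReal _ (le_of_lt (hrpos k))
  -- moments of each E k
  have hEint : ∀ (k q : ℕ), Integrable (fun ω => (E k ω) ^ q) μ := by
    intro k q
    have h1 : Integrable (fun x : ℝ => x ^ q) (Measure.map (E k) μ) := by
      rw [hdist' k]; exact integrable_pow_expMeasure (hrpos k) q
    exact (integrable_map_measure ((measurable_id.pow_const q).aestronglyMeasurable)
      (hmeas k).aemeasurable).1 h1
  have hEval : ∀ (k q : ℕ), ∫ ω, (E k ω) ^ q ∂μ = (q.factorial : ℝ) * (mk k) ^ q := by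
    intro k q
    have h1 : ∫ ω, (E k ω) ^ q ∂μ = ∫ x, x ^ q ∂(Measure.map (E k) μ) :=
      (integral_map (hmeas k).aemeasurable
        ((measurable_id.pow_const q).aestronglyMeasurable)).symm
    rw [h1, hdist' k, integral_pow_expMeasure (hrpos k) q, inv_inv]
  have hEnn : ∀ k, ∀ᵐ ω ∂μ, 0 ≤ E k ω := by
    intro k
    have h0 : ∀ᵐ x ∂(Measure.map (E k) μ), 0 ≤ x := by
      rw [hdist' k]; exact expMeasure_ae_nonneg
    exact (ae_map_iff (hmeas k).aemeasurable measurableSet_Ici).1 h0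
  have hE1 : ∀ k, Integrable (E k) μ := by
    intro k
    have := hEint k 1
    simpa using this
  have hE1val : ∀ k, ∫ ω, E k ω ∂μ = mk k := by
    intro k
    have := hEval k 1
    simpa using this
  -- centered variables
  set Y : ℕ → Ω → ℝ := fun k ω => E k ω - mk k with hYdef
  have hYint : ∀ k, Integrable (Y k) μ := fun k => (hE1 k).sub (integrable_const _)
  have hYmean : ∀ k, ∫ ω, Y k ω ∂μ = 0 := by
    intro k
    rw [hYdef]
    rw [integral_sub (hE1 k) (integrable_const _), hE1val k, integral_const]
    simp
  have hYsqint : ∀ k, Integrable (fun ω => Y k ω * Y k ω) μ := by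
    intro k
    have h : Integrable (fun ω => (E k ω) ^ 2 - (2 * mk k) * E k ω + (mk k)^2) μ :=
      ((hEint k 2).sub ((hE1 k).const_mul _)).add (integrable_const _)
    exact h.congr (ae_of_all _ fun ω => by rw [hYdef]; ring)
  have hYsqval : ∀ k, ∫ ω, Y k ω * Y k ω ∂μ = (mk k) ^ 2 := by
    intro k
    have h : ∀ ω, Y k ω * Y k ω = (E k ω) ^ 2 - (2 * mk k) * E k ω + (mk k)^2 := by
      intro ω; rw [hYdef]; ring
    have hsub : Integrable (fun ω => (E k ω) ^ 2 - (2 * mk k) * E k ω) μ :=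
      (hEint k 2).sub ((hE1 k).const_mul _)
    rw [integral_congr_ae (ae_of_all _ h), integral_add hsub (integrable_const _),
      integral_sub (hEint k 2) ((hE1 k).const_mul _), hEval k 2, integral_const,
      integral_const_mul, hE1val k]
    simp [Nat.factorial]
    ring
  have hYindep : ∀ i j, i ≠ j → IndepFun (Y i) (Y j) μ := by
    intro i j hij
    exact (hindep.indepFun hij).comp (measurable_id.sub_const (mk i))
      (measurable_id.sub_const (mk j))
  have hprod_int : ∀ i j, Integrable (fun ω => Y i ω * Y j ω) μ := by
    intro i j
    rcases eq_or_ne i j with rfl | hij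
    · exact hYsqint i
    · exact (hYindep i j hij).integrable_mul (hYint i) (hYint j)
  have hprod_val : ∀ i j, i ≠ j → ∫ ω, Y i ω * Y j ω ∂μ = 0 := by
    intro i j hij
    have := (hYindep i j hij).integral_mul_eq_mul_integral (hYint i).aestronglyMeasurable
      (hYint j).aestronglyMeasurable
    rw [show (fun ω => Y i ω * Y j ω) = Y i * Y j from rfl, this, hYmean i, hYmean j]
    ring
  -- sums
  set S : ℕ → Ω → ℝ := fun n ω => ∑ k ∈ Finset.range n, E k ω with hSdef
  set M : ℕ → ℝ := fun n => ∑ k ∈ Finset.range n, mk k with hMdef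
  set V : ℕ → ℝ := fun n => ∑ k ∈ Finset.range n, (mk k) ^ 2 with hVdef
  have hSmeas : ∀ n, Measurable (S n) := fun n =>
    Finset.measurable_sum _ (fun k _ => hmeas k)
  have hCsum : ∀ (n : ℕ) (ω : Ω), (S n ω - M n)^2
      = ∑ i ∈ Finset.range n, ∑ j ∈ Finset.range n, Y i ω * Y j ω := by
    intro n ω
    rw [hSdef, hMdef, ← Finset.sum_sub_distrib, pow_two, Finset.sum_mul_sum]
  have hCsq_int : ∀ n, Integrable (fun ω => (S n ω - M n)^2) μ := by
    intro n
    have h := integrable_finset_sum (μ := μ) (Finset.range n)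
      (fun i _ => integrable_finset_sum (Finset.range n) (fun j _ => hprod_int i j))
    exact h.congr (ae_of_all _ fun ω => (hCsum n ω).symm)
  have hCsq_val : ∀ n, ∫ ω, (S n ω - M n)^2 ∂μ = V n := by
    intro n
    rw [integral_congr_ae (ae_of_all _ (hCsum n)),
      integral_finset_sum _ (fun i _ => integrable_finset_sum _ (fun j _ => hprod_int i j))]
    rw [hVdef]
    refine Finset.sum_congr rfl fun i hi => ?_
    rw [integral_finset_sum _ (fun j _ => hprod_int i j)]
    rw [Finset.sum_eq_single_of_mem i hi (fun j _ hj => hprod_val i j (Ne.symm hj)),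
      hYsqval i]
  -- variance bound
  set KK : ℝ := (((m:ℝ) + d + 1) ^ a) ^ 2 with hKK
  have hVbound : ∀ n : ℕ, 1 ≤ n → V n ≤ (n:ℝ) * KK * (((n:ℕ):ℝ) ^ a) ^ 2 := by
    intro n hn
    have hn1 : (1:ℝ) ≤ (n:ℝ) := by exact_mod_cast hn
    have hterm : ∀ k ∈ Finset.range n, (mk k)^2 ≤ KK * (((n:ℕ):ℝ) ^ a) ^ 2 := by
      intro k hk
      have hkn : (k:ℝ) ≤ (n:ℝ) - 1 := by
        have : k + 1 ≤ n := Finset.mem_range.1 hk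
        have := (Nat.cast_le (α := ℝ)).2 this
        push_cast at this
        linarith
      have hb : (m:ℝ) + k + d ≤ ((m:ℝ) + d + 1) * n := by nlinarith [hm1, hd]
      have h1 : mk k ≤ (((m:ℝ) + d + 1) * n) ^ a :=
        Real.rpow_le_rpow (by linarith [hbase k]) hb ha.le
      have h2 : (((m:ℝ) + d + 1) * n) ^ a = ((m:ℝ) + d + 1) ^ a * ((n:ℕ):ℝ) ^ a :=
        Real.mul_rpow (by linarith) (by linarith)
      have h3 : (mk k)^2 ≤ ((((m:ℝ) + d + 1)) ^ a * ((n:ℕ):ℝ) ^ a) ^ 2 := by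
        rw [← h2]
        exact pow_le_pow_left₀ (hmkpos k).le (h2 ▸ h1) 2
      rw [hKK]
      nlinarith [h3]
    calc V n ≤ ∑ _k ∈ Finset.range n, KK * (((n:ℕ):ℝ) ^ a) ^ 2 :=
          Finset.sum_le_sum hterm
      _ = (n:ℝ) * KK * (((n:ℕ):ℝ) ^ a) ^ 2 := by
          rw [Finset.sum_const, Finset.card_range, nsmul_eq_mul]; ring
  -- Chebyshev bound on deviation events
  set eps : ℕ → ℝ := fun l => 1/((l:ℝ)+1) with hepsdef
  have hepspos : ∀ l, 0 < eps l := fun l => by positivity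
  set A : ℕ → ℕ → Set Ω := fun l j =>
    {ω | eps l * ((j^2 : ℕ):ℝ) ^ p ≤ |S (j^2) ω - M (j^2)|} with hAdef
  have hAbound : ∀ l (j : ℕ), 1 ≤ j → μ (A l j)
      ≤ ENNReal.ofReal (KK / ((eps l)^2 * (j:ℝ)^2)) := by
    intro l j hj
    set n : ℕ := j^2 with hn
    have hn1 : 1 ≤ n := by
      have : 1 ≤ j * j := Nat.one_le_iff_ne_zero.2 (by positivity)
      simpa [hn, pow_two] using this
    have hnr : (1:ℝ) ≤ ((n:ℕ):ℝ) := by exact_mod_cast hn1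
    have hNpos : (0:ℝ) < ((n:ℕ):ℝ) := by linarith
    have hq : (0:ℝ) < ((n:ℕ):ℝ) ^ p := Real.rpow_pos_of_pos hNpos p
    set cst : ℝ := eps l * ((n:ℕ):ℝ) ^ p with hcst
    have hcstpos : 0 < cst := mul_pos (hepspos l) hq
    have hsub : A l j ⊆ {ω | ENNReal.ofReal (cst^2)
        ≤ ENNReal.ofReal ((S n ω - M n)^2)} := by
      intro ω hω
      have h1 : cst ≤ |S n ω - M n| := hω
      have h2 : cst^2 ≤ (S n ω - M n)^2 := by
        rw [← sq_abs (S n ω - M n)]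
        exact pow_le_pow_left₀ hcstpos.le h1 2
      exact ENNReal.ofReal_le_ofReal h2
    have hlint : ∫⁻ ω, ENNReal.ofReal ((S n ω - M n)^2) ∂μ = ENNReal.ofReal (V n) := by
      rw [← ofReal_integral_eq_lintegral_ofReal (hCsq_int n)
        (ae_of_all _ fun ω => sq_nonneg _), hCsq_val n]
    have hcheb := mul_meas_ge_le_lintegral₀ (μ := μ)
      (f := fun ω => ENNReal.ofReal ((S n ω - M n)^2))
      ((((hSmeas n).sub_const (M n)).pow_const 2).ennreal_ofReal.aemeasurable)
      (ENNReal.ofReal (cst^2))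
    rw [hlint] at hcheb
    have hle : μ (A l j) ≤ ENNReal.ofReal (V n) / ENNReal.ofReal (cst^2) := by
      refine le_trans (measure_mono hsub) ?_
      rw [ENNReal.le_div_iff_mul_le (Or.inl (by
          rw [Ne, ENNReal.ofReal_eq_zero, not_le]; positivity))
        (Or.inl ENNReal.ofReal_ne_top), mul_comm]
      exact hcheb
    refine hle.trans ?_
    rw [← ENNReal.ofReal_div_of_pos (show (0:ℝ) < cst^2 by positivity)]
    apply ENNReal.ofReal_le_ofReal
    -- real arithmetic
    have hxpos : (0:ℝ) < ((n:ℕ):ℝ) ^ a := Real.rpow_pos_of_pos hNpos a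
    have hpows : ((n:ℕ):ℝ) ^ p = ((n:ℕ):ℝ) * ((n:ℕ):ℝ) ^ a := by
      rw [hpdef, Real.rpow_add hNpos, Real.rpow_one]
    have hVb := hVbound n hn1
    have hcast : (j:ℝ)^2 = ((n:ℕ):ℝ) := by rw [hn]; push_cast; ring
    have hKK0 : 0 ≤ KK := by rw [hKK]; positivity
    rw [hcast, div_le_div_iff₀ (by positivity) (by positivity), hcst, hpows]
    calc V n * ((eps l)^2 * ((n:ℕ):ℝ))
        ≤ ((n:ℕ):ℝ) * KK * (((n:ℕ):ℝ)^a)^2 * ((eps l)^2 * ((n:ℕ):ℝ)) :=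
          mul_le_mul_of_nonneg_right hVb (by positivity)
      _ = KK * (eps l * (((n:ℕ):ℝ) * ((n:ℕ):ℝ)^a))^2 := by ring
  -- Borel–Cantelli
  have hBC : ∀ᵐ ω ∂μ, ∀ l : ℕ, ∀ᶠ j in atTop, ω ∉ A l j := by
    rw [ae_all_iff]
    intro l
    apply MeasureTheory.ae_eventually_notMem
    rw [tsum_eq_zero_add' ENNReal.summable]
    refine ENNReal.add_ne_top.2 ⟨(measure_lt_top μ _).ne, ?_⟩
    have hsummable : Summable (fun j : ℕ => KK / ((eps l)^2 * (((j+1:ℕ)):ℝ)^2)) := by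
      have hbase2 : Summable (fun n : ℕ => 1 / ((n:ℝ))^2) :=
        Real.summable_one_div_nat_pow.2 one_lt_two
      have hshift : Summable (fun j : ℕ => 1 / (((j+1:ℕ)):ℝ)^2) :=
        (summable_nat_add_iff 1).2 hbase2
      apply (hshift.mul_left (KK/(eps l)^2)).congr
      intro j
      rw [← div_div, div_eq_mul_one_div (KK/(eps l)^2)]
    have hsum_le : ∑' j : ℕ, μ (A l (j+1))
        ≤ ∑' j : ℕ, ENNReal.ofReal (KK / ((eps l)^2 * (((j+1:ℕ)):ℝ)^2)) :=
      ENNReal.tsum_le_tsum (fun j => hAbound l (j+1) (by omega))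
    rw [← ENNReal.ofReal_tsum_of_nonneg (fun j => by positivity) hsummable] at hsum_le
    exact ne_top_of_le_ne_top ENNReal.ofReal_ne_top hsum_le
  -- almost-sure assembly
  filter_upwards [hBC, ae_all_iff.2 hEnn] with ω hω hnn
  set s : ℕ → ℝ := fun n => S n ω with hsdef
  have hsmono : Monotone s := fun n n' h =>
    Finset.sum_le_sum_of_subset_of_nonneg (Finset.range_subset_range.2 h) (fun k _ _ => hnn k)
  have hspos : ∀ n, 0 ≤ s n := fun n => Finset.sum_nonneg fun k _ => hnn k
  have hMlim : Tendsto (fun n : ℕ => M n / (n:ℝ) ^ ((1:ℝ)+a)) atTop (nhds (1/(1+a))) := by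
    have h := PBGaux.M_asymp (c := (m:ℝ)+d) (by linarith) ha ha1
    apply h.congr
    intro n
    congr 1
    exact Finset.sum_congr rfl fun k _ => by rw [hmkdef]; congr 1; ring
  have hsqz : Tendsto (fun j : ℕ => (s (j^2) - M (j^2)) / ((j^2:ℕ):ℝ) ^ ((1:ℝ)+a))
      atTop (nhds 0) := by
    rw [NormedAddCommGroup.tendsto_nhds_zero]
    intro ε' hε'
    obtain ⟨l, hl⟩ := exists_nat_one_div_lt hε'
    filter_upwards [hω l, eventually_ge_atTop 1] with j hj hj1
    have hq : (0:ℝ) < ((j^2:ℕ):ℝ) ^ p := by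
      have h1 : 1 ≤ j^2 := by
        have : 1 ≤ j * j := Nat.one_le_iff_ne_zero.2 (by positivity)
        simpa [pow_two] using this
      exact Real.rpow_pos_of_pos (by exact_mod_cast h1) p
    simp only [hAdef, Set.mem_setOf_eq] at hj
    have hj2 : |S (j^2) ω - M (j^2)| < eps l * ((j^2:ℕ):ℝ) ^ p := not_le.1 hj
    rw [Real.norm_eq_abs, abs_div, abs_of_pos hq, div_lt_iff₀ hq]
    calc |s (j^2) - M (j^2)| < eps l * ((j^2:ℕ):ℝ) ^ p := hj2
      _ ≤ ε' * ((j^2:ℕ):ℝ) ^ p := mul_le_mul_of_nonneg_right hl.le hq.le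
  have hslim : Tendsto (fun n : ℕ => s n / (n:ℝ) ^ ((1:ℝ)+a)) atTop (nhds (1/(1+a))) :=
    PBGaux.interp ha s M hsmono hspos hMlim hsqz
  have hinv := PBGaux.invert ha (by positivity : (0:ℝ) < 1/(1+a)) s hsmono
    (by simp [hsdef, hSdef]) hslim
  rw [one_div_one_div] at hinv
  have hzero : Tendsto (fun t : ℝ => ((m:ℝ)-1) * (t ^ ((1:ℝ)/(1+a)))⁻¹) atTop (nhds 0) := by
    have h := (tendsto_rpow_atTop (by positivity : (0:ℝ) < 1/(1+a))).inv_tendsto_atTop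
    simpa using h.const_mul ((m:ℝ)-1)
  have hcomb := hinv.add hzero
  rw [add_zero] at hcomb
  apply hcomb.congr
  intro t
  have hset : {n : ℕ | T n ω ≤ t} = {n : ℕ | s (n-1) ≤ t} := by
    ext n
    simp [hT n ω, hsdef, hSdef]
  rw [hZ t ω, hset]
  have hge : 1 ≤ sSup {n : ℕ | s (n-1) ≤ t} + m := by omega
  push_cast [Nat.cast_sub hge]
  simp only [div_eq_mul_inv]
  ring
end

section
/- Let λ* > 0, α > 0, δ ≥ 0 and define p̃_k = ((k+δ)^α λ*)/((k+δ)^α λ* + 1) · ∏_{i=1}^{k-1} 1/((i+δ)^α λ* + 1) for k ≥ 1. Then ∑_{k=1}^∞ p̃_k = 1, i.e., (p̃_k) is a probability distribution. -/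
open Finset

/-- With `p̃_k = ((k+δ)^α λ*)/((k+δ)^α λ* + 1) ⬝ ∏_{i=1}^{k-1} 1/((i+δ)^α λ* + 1)` for `k ≥ 1`,
we have `∑_{k=1}^∞ p̃_k = 1`. -/
theorem limiting_degree_distribution_sums_to_one
    (l α δ : ℝ) (hl : 0 < l) (hα : 0 < α) (hδ : 0 ≤ δ) :
    (∑' k : ℕ,
      (((k : ℝ) + 1 + δ) ^ α * l) / (((k : ℝ) + 1 + δ) ^ α * l + 1) *
        ∏ i ∈ Finset.Icc 1 k, 1 / (((i : ℝ) + δ) ^ α * l + 1)) = 1 := by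
  set f : ℕ → ℝ := fun k =>
    (((k : ℝ) + 1 + δ) ^ α * l) / (((k : ℝ) + 1 + δ) ^ α * l + 1) *
      ∏ i ∈ Finset.Icc 1 k, 1 / (((i : ℝ) + δ) ^ α * l + 1) with hf
  set Q : ℕ → ℝ := fun n => ∏ i ∈ Finset.Icc 1 n, 1 / (((i : ℝ) + δ) ^ α * l + 1) with hQ
  have hxpos : ∀ x : ℝ, 0 < x → 0 < x ^ α * l + 1 := by
    intro x hx
    have := Real.rpow_pos_of_pos hx α
    positivity
  have hQpos : ∀ n, 0 < Q n := by
    intro n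
    apply Finset.prod_pos
    intro i hi
    have hil : 1 ≤ i := (Finset.mem_Icc.mp hi).1
    have : (0:ℝ) < (i : ℝ) + δ := by
      have : (1:ℝ) ≤ (i:ℝ) := by exact_mod_cast hil
      linarith
    have := hxpos _ this
    positivity
  have hfQ : ∀ n, f n = Q n - Q (n+1) := by
    intro n
    have hx : (0:ℝ) < (n : ℝ) + 1 + δ := by positivity
    have hden := hxpos _ hx
    have hstep : Q (n+1) = Q n * (1 / (((n:ℝ) + 1 + δ) ^ α * l + 1)) := by
      simp only [hQ]
      rw [Finset.prod_Icc_succ_top (by omega : 1 ≤ n + 1)]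
      push_cast
      ring
    have key : (1:ℝ) - 1 / (((n:ℝ) + 1 + δ) ^ α * l + 1)
        = (((n:ℝ) + 1 + δ) ^ α * l) / (((n:ℝ) + 1 + δ) ^ α * l + 1) := by
      field_simp
      ring
    rw [hf, hstep, ← mul_one_sub, key]
    ring
  have hsum : ∀ n, ∑ k ∈ Finset.range n, f k = 1 - Q n := by
    intro n
    induction n with
    | zero => simp [hQ]
    | succ n ih =>
      rw [Finset.sum_range_succ, ih, hfQ n]; ring
  -- bound Q n ≤ r ^ n
  set r : ℝ := 1 / (((1:ℝ) + δ) ^ α * l + 1) with hr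
  have h1δ : (0:ℝ) < 1 + δ := by linarith
  have hrden := hxpos _ h1δ
  have hr0 : 0 < r := by rw [hr]; positivity
  have hr1 : r < 1 := by
    rw [hr, div_lt_one hrden]
    have := Real.rpow_pos_of_pos h1δ α
    nlinarith
  have hQle : ∀ n, Q n ≤ r ^ n := by
    intro n
    have hcard : (Finset.Icc 1 n).card = n := by simp
    calc Q n ≤ ∏ _i ∈ Finset.Icc 1 n, r := by
          apply Finset.prod_le_prod
          · intro i hi
            have hil : 1 ≤ i := (Finset.mem_Icc.mp hi).1
            have h1i : (1:ℝ) ≤ (i:ℝ) := by exact_mod_cast hil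
            have : (0:ℝ) < (i:ℝ) + δ := by linarith
            have := hxpos _ this
            positivity
          · intro i hi
            have hil : 1 ≤ i := (Finset.mem_Icc.mp hi).1
            have h1i : (1:ℝ) ≤ (i:ℝ) := by exact_mod_cast hil
            have hiδ : (0:ℝ) < (i:ℝ) + δ := by linarith
            have hle : ((1:ℝ) + δ) ^ α ≤ ((i:ℝ) + δ) ^ α :=
              Real.rpow_le_rpow (le_of_lt h1δ) (by linarith) (le_of_lt hα)
            have hiden := hxpos _ hiδ
            rw [hr]
            apply div_le_div_of_nonneg_left (by norm_num) hrden
            nlinarith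
      _ = r ^ n := by rw [Finset.prod_const, hcard]
  have hQ0 : Filter.Tendsto Q Filter.atTop (nhds 0) := by
    apply squeeze_zero (fun n => le_of_lt (hQpos n)) hQle
    exact tendsto_pow_atTop_nhds_zero_of_lt_one (le_of_lt hr0) hr1
  have htend : Filter.Tendsto (fun n => ∑ k ∈ Finset.range n, f k) Filter.atTop (nhds 1) := by
    simp only [hsum]
    have : Filter.Tendsto (fun n => 1 - Q n) Filter.atTop (nhds (1 - 0)) :=
      Filter.Tendsto.sub tendsto_const_nhds hQ0
    simpa using this
  have hfnonneg : ∀ k, 0 ≤ f k := by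
    intro k
    have hx : (0:ℝ) < (k : ℝ) + 1 + δ := by positivity
    have h1 := Real.rpow_pos_of_pos hx α
    have h2 := hxpos _ hx
    have h3 := (hQpos k).le
    rw [hf]
    apply mul_nonneg (by positivity) h3
  have : HasSum f 1 := (hasSum_iff_tendsto_nat_of_nonneg hfnonneg 1).mpr htend
  exact this.tsum_eq
end

section
/- For λ* > 0, α > 0, δ ≥ 0, the tail t_n = ∏_{i=1}^{n-1} 1/(1 + (i+δ)^α λ*) satisfies t_n ≤ 1/((λ*)^{n-1} ((n-1)!)^α), and hence t_n = o(c^n) for every c > 0 (the tail decays faster than any exponential). -/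
open Finset Filter

/-- For `λ* > 0`, `α > 0`, `δ ≥ 0`, the tail `t_n = ∏_{i=1}^{n-1} 1/(1 + (i+δ)^α λ*)`
satisfies `t_n ≤ 1/((λ*)^{n-1} ((n-1)!)^α)`, hence `t_n = o(c^n)` for every `c > 0`. -/
theorem tail_decays_faster_than_exponential
    (l α δ : ℝ) (hl : 0 < l) (hα : 0 < α) (hδ : 0 ≤ δ) :
    (∀ n : ℕ, 1 ≤ n →
      (∏ i ∈ Finset.Icc 1 (n - 1), 1 / (1 + ((i : ℝ) + δ) ^ α * l)) ≤
        1 / (l ^ (n - 1) * ((Nat.factorial (n - 1) : ℝ)) ^ α)) ∧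
    (∀ c : ℝ, 0 < c →
      Tendsto (fun n : ℕ =>
        (∏ i ∈ Finset.Icc 1 (n - 1), 1 / (1 + ((i : ℝ) + δ) ^ α * l)) / c ^ n)
        atTop (nhds 0)) := by
  have key : ∀ m : ℕ,
      (∏ i ∈ Finset.Icc 1 m, 1 / (1 + ((i : ℝ) + δ) ^ α * l)) ≤
        1 / (l ^ m * ((Nat.factorial m : ℝ)) ^ α) := by
    intro m
    have h1 : ∀ i ∈ Finset.Icc 1 m,
        1 / (1 + ((i : ℝ) + δ) ^ α * l) ≤ 1 / ((i : ℝ) ^ α * l) := by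
      intro i hi
      have hi1 : 1 ≤ i := (Finset.mem_Icc.mp hi).1
      have hip : (0:ℝ) < (i:ℝ) := by exact_mod_cast Nat.lt_of_lt_of_le Nat.zero_lt_one hi1
      have h0 : (0:ℝ) < (i:ℝ) ^ α * l :=
        mul_pos (Real.rpow_pos_of_pos hip α) hl
      apply one_div_le_one_div_of_le h0
      have h2 : (i:ℝ) ^ α ≤ ((i:ℝ) + δ) ^ α :=
        Real.rpow_le_rpow hip.le (by linarith) hα.le
      nlinarith
    have heq : (∏ i ∈ Finset.Icc 1 m, 1 / ((i : ℝ) ^ α * l))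
        = 1 / (l ^ m * ((Nat.factorial m : ℝ)) ^ α) := by
      simp only [one_div]
      rw [Finset.prod_inv_distrib]
      congr 1
      rw [Finset.prod_mul_distrib, Finset.prod_const, Nat.card_Icc]
      have hfac : (∏ i ∈ Finset.Icc 1 m, ((i : ℝ)) ^ α)
          = ((Nat.factorial m : ℝ)) ^ α := by
        rw [Real.finset_prod_rpow _ _ (fun i _ => by positivity) α]
        congr 1
        rw [← Nat.cast_prod]
        norm_cast
        rw [← Finset.Ico_add_one_right_eq_Icc]
        exact Finset.prod_Ico_id_eq_factorial m
      rw [hfac, Nat.add_sub_cancel, mul_comm]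
    calc (∏ i ∈ Finset.Icc 1 m, 1 / (1 + ((i : ℝ) + δ) ^ α * l))
        ≤ ∏ i ∈ Finset.Icc 1 m, 1 / ((i : ℝ) ^ α * l) := by
          apply Finset.prod_le_prod _ h1
          intro i hi
          positivity
      _ = _ := heq
  refine ⟨fun n _ => key (n - 1), ?_⟩
  intro c hc
  -- the dominating sequence
  set r : ℝ := (1 / (l * c)) ^ α⁻¹ with hr
  have hlc : 0 < l * c := mul_pos hl hc
  have hr0 : 0 ≤ r := Real.rpow_nonneg (by positivity) _
  have hrα : r ^ α = 1 / (l * c) := Real.rpow_inv_rpow (by positivity) hα.ne'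
  have h3 : Tendsto (fun m : ℕ => ((r ^ m / (Nat.factorial m : ℝ)) ^ α)) atTop (nhds 0) := by
    have h4 : Tendsto (fun m : ℕ => r ^ m / (Nat.factorial m : ℝ)) atTop (nhds 0) :=
      FloorSemiring.tendsto_pow_div_factorial_atTop r
    have h5 : ContinuousAt (fun x : ℝ => x ^ α) 0 :=
      Real.continuousAt_rpow_const 0 α (Or.inr hα.le)
    have := h5.tendsto.comp h4
    simpa [Function.comp_def, Real.zero_rpow hα.ne'] using this
  have hgeq : ∀ m : ℕ, (r ^ m / (Nat.factorial m : ℝ)) ^ α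
      = 1 / ((l * c) ^ m * ((Nat.factorial m : ℝ)) ^ α) := by
    intro m
    have hfpos : (0:ℝ) < (Nat.factorial m : ℝ) := by positivity
    have h10 : ((r ^ m : ℝ)) ^ α = (1 / (l * c)) ^ m := by
      rw [← Real.rpow_natCast r m, ← Real.rpow_mul hr0, mul_comm,
        Real.rpow_mul hr0, hrα, Real.rpow_natCast]
    rw [Real.div_rpow (by positivity) hfpos.le, h10]
    have hfne : ((Nat.factorial m:ℝ)) ^ α ≠ 0 := by positivity
    rw [div_pow, one_pow, div_div, one_div]
  have h6 : Tendsto (fun n : ℕ =>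
      (1 / c) * (1 / ((l * c) ^ (n-1) * ((Nat.factorial (n-1) : ℝ)) ^ α))) atTop (nhds 0) := by
    have h7 : Tendsto (fun n : ℕ => n - 1) atTop atTop := tendsto_sub_atTop_nat 1
    have h8 := (h3.comp h7)
    have h9 : Tendsto (fun n : ℕ =>
        (1 / ((l * c) ^ (n-1) * ((Nat.factorial (n-1) : ℝ)) ^ α))) atTop (nhds 0) := by
      refine h8.congr fun n => ?_
      simp only [Function.comp]
      rw [hgeq]
    simpa using h9.const_mul (1 / c)
  apply squeeze_zero' (g := fun n : ℕ =>
      (1 / c) * (1 / ((l * c) ^ (n-1) * ((Nat.factorial (n-1) : ℝ)) ^ α))) ?_ ?_ h6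
  · filter_upwards with n
    apply div_nonneg _ (by positivity)
    apply Finset.prod_nonneg
    intro i hi
    have hi1 : 1 ≤ i := (Finset.mem_Icc.mp hi).1
    have hip : (0:ℝ) < (i:ℝ) := by exact_mod_cast Nat.lt_of_lt_of_le Nat.zero_lt_one hi1
    positivity
  · filter_upwards [eventually_ge_atTop 1] with n hn
    have hcn : (0:ℝ) < c ^ n := by positivity
    have := key (n - 1)
    calc (∏ i ∈ Finset.Icc 1 (n - 1), 1 / (1 + ((i : ℝ) + δ) ^ α * l)) / c ^ n
        ≤ (1 / (l ^ (n-1) * ((Nat.factorial (n-1) : ℝ)) ^ α)) / c ^ n :=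
          div_le_div_of_nonneg_right this hcn.le |>.trans_eq rfl
      _ = (1 / c) * (1 / ((l * c) ^ (n-1) * ((Nat.factorial (n-1) : ℝ)) ^ α)) := by
          have hcn' : c ^ n = c * c ^ (n - 1) := by
            rw [← pow_succ']
            congr 1
            omega
          have hfpos : (0:ℝ) < ((Nat.factorial (n-1) : ℝ)) ^ α := by positivity
          rw [hcn', mul_pow]
          field_simp
end
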